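/- arXiv:2509.17341 — 7 statements merged into one kernel-verified Lean document; each statement's English description precedes it below -/
import Mathlib

section
/- Let N ≥ 1, let L be a real N×N matrix, and let λ > 0 be such that x ⬝ (L x) ≥ λ‖x‖² for every x ∈ ℝᴺ. Let α > 0 and β satisfy βλ ≥ 1, let t_e > 0, and let h be the scaling function associated with t_e. Suppose e : ℝ → ℝᴺ is differentiable on [0, t_e) and satisfies e'(t) = (−α + β·h'(t)/h(t)) · (L e(t)) for all t ∈ (0, t_e), where h'(t) = cos(πt/t_e) + 1. Then for every t ∈ [0, t_e), ‖e(t)‖² ≤ (h(t)²/t_e²)·exp(−2αλt)·‖e(0)‖²; in particular ‖e(t)‖ → 0 as t → t_e⁻, and if e is continuous at t_e then e(t_e) = 0. -/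
open Matrix Filter Topology

noncomputable def scalingFn (te t : ℝ) : ℝ :=
  if t < te then (te / Real.pi) * Real.sin (Real.pi * t / te) + t - te else 1

-- smooth version
noncomputable def hs (te t : ℝ) : ℝ := (te / Real.pi) * Real.sin (Real.pi * t / te) + t - te

lemma scalingFn_eq (te t : ℝ) (h : t < te) : scalingFn te t = hs te t := by
  simp [scalingFn, hs, h]

lemma hs_hasDerivAt (te : ℝ) (hte : 0 < te) (t : ℝ) :
    HasDerivAt (hs te) (Real.cos (Real.pi * t / te) + 1) t := by
  have h1 : HasDerivAt (fun t : ℝ => Real.pi * t / te) (Real.pi / te) t := by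
    simpa using ((hasDerivAt_id t).const_mul Real.pi).div_const te
  have h2 := (h1.sin).const_mul (te / Real.pi)
  have h3 : HasDerivAt (hs te) (te / Real.pi * (Real.cos (Real.pi * t / te) * (Real.pi / te)) + 1) t := by
    exact (h2.add (hasDerivAt_id t)).sub_const te
  convert h3 using 1
  field_simp

lemma hs_neg (te : ℝ) (hte : 0 < te) (t : ℝ) (ht : 0 ≤ t) (ht' : t < te) : hs te t < 0 := by
  have hπ := Real.pi_pos
  set u := Real.pi * t / te with hu
  have hu0 : 0 ≤ u := by positivity
  have huπ : u < Real.pi := by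
    rw [hu, div_lt_iff₀ hte]
    calc Real.pi * t < Real.pi * te := by nlinarith
    _ = Real.pi * te := rfl
  have hsin : Real.sin u < Real.pi - u := by
    have := Real.sin_lt (x := Real.pi - u) (by linarith)
    rwa [Real.sin_pi_sub] at this
  have ht_eq : t = te * u / Real.pi := by
    rw [hu]; field_simp
  rw [hs, ← hu, ht_eq]
  have : te / Real.pi * Real.sin u + te * u / Real.pi - te
      = (te / Real.pi) * (Real.sin u + u - Real.pi) := by field_simp
  rw [this]
  have : Real.sin u + u - Real.pi < 0 := by linarith
  have hpos : 0 < te / Real.pi := by positivity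
  nlinarith

lemma hs_zero (te : ℝ) (hte : 0 < te) : hs te 0 = -te := by
  simp [hs]

lemma hs_te (te : ℝ) (hte : 0 < te) : hs te te = 0 := by
  have hπ : Real.pi ≠ 0 := Real.pi_ne_zero
  have : Real.pi * te / te = Real.pi := by field_simp
  simp [hs, this]

set_option maxHeartbeats 1000000 in
/-- Theorem 1 of the paper: prescribed-time consensus for the
time-to-go error vector `e` under the protocol `e' = (−α + β h'/h) L e`. -/
theorem prescribed_time_consensus
    (N : ℕ) (hN : 1 ≤ N) (L : Matrix (Fin N) (Fin N) ℝ)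
    (lam : ℝ) (hlam : 0 < lam)
    (hquad : ∀ x : EuclideanSpace ℝ (Fin N), lam * ‖x‖ ^ 2 ≤ x ⬝ᵥ L.mulVec x)
    (α β : ℝ) (hα : 0 < α) (hβ : 1 ≤ β * lam)
    (te : ℝ) (hte : 0 < te)
    (e : ℝ → EuclideanSpace ℝ (Fin N))
    (hdiff : DifferentiableOn ℝ e (Set.Ico 0 te))
    (hode : ∀ t ∈ Set.Ioo (0 : ℝ) te,
      HasDerivAt e
        ((-α + β * ((Real.cos (Real.pi * t / te) + 1) / scalingFn te t)) •
          (WithLp.toLp 2 (L.mulVec (e t)) : EuclideanSpace ℝ (Fin N))) t) :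
    (∀ t ∈ Set.Ico (0 : ℝ) te,
      ‖e t‖ ^ 2 ≤ (scalingFn te t) ^ 2 / te ^ 2 * Real.exp (-(2 * α * lam) * t) * ‖e 0‖ ^ 2) ∧
    Tendsto (fun t => ‖e t‖) (nhdsWithin te (Set.Iio te)) (nhds 0) ∧
    (ContinuousAt e te → e te = 0) := by
  have hβ0 : 0 < β := by nlinarith
  -- the Lyapunov-type quotient
  set g : ℝ → ℝ := fun t => ‖e t‖ ^ 2 * Real.exp (2 * α * lam * t) / (hs te t) ^ 2 with hg_def
  -- derivative of g nonpositive on the interior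
  have hg_deriv : ∀ x ∈ Set.Ioo (0 : ℝ) te, ∃ D ≤ 0, HasDerivAt g D x := by
    intro x hx
    obtain ⟨hx0, hxte⟩ := hx
    set H : ℝ := hs te x with hH_def
    set H' : ℝ := Real.cos (Real.pi * x / te) + 1 with hH'_def
    set c : ℝ := -α + β * (H' / H) with hc_def
    have hHneg : H < 0 := hs_neg te hte x hx0.le hxte
    have hHne : H ≠ 0 := ne_of_lt hHneg
    have hH'0 : 0 ≤ H' := by
      rw [hH'_def]; have := Real.neg_one_le_cos (Real.pi * x / te); linarith
    have hde : HasDerivAt e (c • (WithLp.toLp 2 (L.mulVec (e x)) : EuclideanSpace ℝ (Fin N))) x := by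
      have := hode x ⟨hx0, hxte⟩
      rwa [scalingFn_eq te x hxte] at this
    set Le : EuclideanSpace ℝ (Fin N) := (WithLp.toLp 2 (L.mulVec (e x)) : EuclideanSpace ℝ (Fin N)) with hLe_def
    set P : ℝ := (inner ℝ (e x) Le : ℝ) with hP_def
    have hV : HasDerivAt (fun t => ‖e t‖ ^ 2) (2 * (c * P)) x := by
      have h1 := (hde.inner ℝ hde : HasDerivAt (fun t => (inner ℝ (e t) (e t) : ℝ)) _ x)
      have h2 : (fun t => (inner ℝ (e t) (e t) : ℝ)) = fun t => ‖e t‖ ^ 2 := by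
        funext t; exact real_inner_self_eq_norm_sq (e t)
      rw [h2] at h1
      refine h1.congr_deriv ?_
      have hsym : (inner ℝ ((c • Le : EuclideanSpace ℝ (Fin N))) (e x) : ℝ)
          = inner ℝ (e x) ((c • Le : EuclideanSpace ℝ (Fin N))) := real_inner_comm _ _
      rw [hsym, real_inner_smul_right, hP_def]
      ring
    have hE : HasDerivAt (fun t => Real.exp (2 * α * lam * t)) (2 * α * lam * Real.exp (2 * α * lam * x)) x := by
      have h1 : HasDerivAt (fun t : ℝ => 2 * α * lam * t) (2 * α * lam) x := by
        simpa using (hasDerivAt_id x).const_mul (2 * α * lam)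
      simpa [mul_comm] using h1.exp
    have hH : HasDerivAt (fun t => (hs te t) ^ 2) (2 * H ^ 1 * H') x := by
      exact (hs_hasDerivAt te hte x).pow 2
    set E : ℝ := Real.exp (2 * α * lam * x) with hE_def
    have hg : HasDerivAt g
        (((2 * (c * P) * E + ‖e x‖ ^ 2 * (2 * α * lam * E)) * H ^ 2
          - ‖e x‖ ^ 2 * E * (2 * H ^ 1 * H')) / (H ^ 2) ^ 2) x :=
      ((hV.mul hE).div hH (by positivity))
    refine ⟨_, ?_, hg⟩
    -- show the derivative value is ≤ 0
    apply div_nonpos_of_nonpos_of_nonneg _ (by positivity)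
    set V : ℝ := ‖e x‖ ^ 2 with hV_def
    have hV0 : 0 ≤ V := by positivity
    have hE0 : 0 < E := Real.exp_pos _
    have hPge : lam * V ≤ P := by
      have := hquad (e x)
      rw [hP_def]
      have hinner : (inner ℝ (e x) Le : ℝ)
          = (e x : Fin N → ℝ) ⬝ᵥ L.mulVec (e x) := by
        rw [hLe_def]; simp [inner, dotProduct, mul_comm]
      rw [hinner]; exact this
    have hcH : c * H = β * H' - α * H := by
      rw [hc_def]; field_simp; ring
    -- key inequality
    have hcHH : (c * H) * H = β * H' * H - α * H ^ 2 := by rw [hcH]; ring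
    have hneg : (c * H) * H ≤ 0 := by
      rw [hcHH]; nlinarith [mul_nonneg (mul_nonneg hβ0.le hH'0) (neg_nonneg.2 hHneg.le)]
    have hA : P * (c * H * H) ≤ lam * V * (c * H * H) := mul_le_mul_of_nonpos_right hPge hneg
    have h2' : lam * V * (c * H * H) = β * lam * (V * H' * H) - α * lam * V * H ^ 2 := by
      rw [hcHH]; ring
    have hVH'H : V * H' * H ≤ 0 := by
      have := mul_nonneg hV0 hH'0
      nlinarith
    have h3' : β * lam * (V * H' * H) ≤ 1 * (V * H' * H) :=
      mul_le_mul_of_nonpos_right hβ hVH'H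
    have h4 : P * (c * H * H) + α * lam * V * H ^ 2 - V * H * H' ≤ 0 := by nlinarith [hA, h3']
    have hnum : (2 * (c * P) * E + V * (2 * α * lam * E)) * H ^ 2 - V * E * (2 * H ^ 1 * H')
        = 2 * E * (P * (c * H * H) + α * lam * V * H ^ 2 - V * H * H') := by ring
    rw [hnum]
    exact mul_nonpos_of_nonneg_of_nonpos (by positivity) h4
  -- continuity pieces
  have hconte : ContinuousOn e (Set.Ico 0 te) := hdiff.continuousOn
  have hconths : Continuous (hs te) := by unfold hs; fun_prop
  have hHneg : ∀ t ∈ Set.Ico (0:ℝ) te, hs te t < 0 := fun t ht => hs_neg te hte t ht.1 ht.2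
  have hgcont : ContinuousOn g (Set.Ico 0 te) := by
    apply ContinuousOn.div
    · exact ((continuous_norm.comp_continuousOn hconte).pow 2).mul
        (Real.continuous_exp.comp (by fun_prop)).continuousOn
    · exact (hconths.pow 2).continuousOn
    · intro t ht; exact pow_ne_zero _ (ne_of_lt (hHneg t ht))
  have hanti : AntitoneOn g (Set.Ico 0 te) := by
    apply antitoneOn_of_deriv_nonpos (convex_Ico 0 te) hgcont
    · intro x hx
      rw [interior_Ico] at hx
      obtain ⟨D, hD, hg⟩ := hg_deriv x hx
      exact hg.differentiableAt.differentiableWithinAt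
    · intro x hx
      rw [interior_Ico] at hx
      obtain ⟨D, hD, hg⟩ := hg_deriv x hx
      rw [hg.deriv]; exact hD
  have hbound : ∀ t ∈ Set.Ico (0:ℝ) te,
      ‖e t‖ ^ 2 ≤ (scalingFn te t) ^ 2 / te ^ 2 * Real.exp (-(2 * α * lam) * t) * ‖e 0‖ ^ 2 := by
    intro t ht
    have h0mem : (0:ℝ) ∈ Set.Ico (0:ℝ) te := ⟨le_refl 0, hte⟩
    have hle := hanti h0mem ht ht.1
    simp only [hg_def] at hle
    rw [hs_zero te hte] at hle
    simp only [mul_zero, Real.exp_zero, mul_one, neg_sq] at hle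
    rw [scalingFn_eq te t ht.2]
    have hH : hs te t < 0 := hHneg t ht
    have hH2 : (0:ℝ) < (hs te t) ^ 2 := by nlinarith
    have hE0 : (0:ℝ) < Real.exp (2 * α * lam * t) := Real.exp_pos _
    rw [div_le_div_iff₀ hH2 (by positivity : (0:ℝ) < te^2)] at hle
    have hexp : Real.exp (-(2 * α * lam) * t) = (Real.exp (2 * α * lam * t))⁻¹ := by
      rw [← Real.exp_neg]; ring_nf
    rw [hexp, show (hs te t) ^ 2 / te ^ 2 * (Real.exp (2 * α * lam * t))⁻¹ * ‖e 0‖ ^ 2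
        = (‖e 0‖ ^ 2 * (hs te t) ^ 2) / (te ^ 2 * Real.exp (2 * α * lam * t)) from by
          field_simp,
      le_div_iff₀ (by positivity)]
    linarith [hle]
  have hsc : Tendsto (fun t => scalingFn te t) (nhdsWithin te (Set.Iio te)) (nhds 0) := by
    have h1 : Tendsto (hs te) (nhdsWithin te (Set.Iio te)) (nhds 0) := by
      have h2 : Tendsto (hs te) (nhdsWithin te (Set.Iio te)) (nhds (hs te te)) :=
        (hconths.tendsto te).mono_left nhdsWithin_le_nhds
      rwa [hs_te te hte] at h2
    apply h1.congr'
    filter_upwards [self_mem_nhdsWithin] with t ht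
    exact (scalingFn_eq te t ht).symm
  have hexp_t : Tendsto (fun t => Real.exp (-(2 * α * lam) * t)) (nhdsWithin te (Set.Iio te))
      (nhds (Real.exp (-(2 * α * lam) * te))) :=
    ((Real.continuous_exp.comp (by fun_prop)).tendsto te).mono_left nhdsWithin_le_nhds
  have hB : Tendsto (fun t => (scalingFn te t) ^ 2 / te ^ 2 * Real.exp (-(2 * α * lam) * t) * ‖e 0‖ ^ 2)
      (nhdsWithin te (Set.Iio te)) (nhds 0) := by
    have h5 := (((hsc.pow 2).div_const (te ^ 2)).mul hexp_t).mul_const (‖e 0‖ ^ 2)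
    have : ((0:ℝ) ^ 2 / te ^ 2 * Real.exp (-(2 * α * lam) * te) * ‖e 0‖ ^ 2) = 0 := by
      norm_num
    rwa [this] at h5
  have hsq : Tendsto (fun t => ‖e t‖ ^ 2) (nhdsWithin te (Set.Iio te)) (nhds 0) := by
    apply tendsto_of_tendsto_of_tendsto_of_le_of_le' tendsto_const_nhds hB
    · filter_upwards with t using by positivity
    · filter_upwards [Ioo_mem_nhdsLT_of_mem ⟨hte, le_refl te⟩] with t ht
      exact hbound t ⟨ht.1.le, ht.2⟩
  have htnorm : Tendsto (fun t => ‖e t‖) (nhdsWithin te (Set.Iio te)) (nhds 0) := by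
    have h1 : Tendsto (fun t => Real.sqrt (‖e t‖ ^ 2)) (nhdsWithin te (Set.Iio te))
        (nhds (Real.sqrt 0)) := (Real.continuous_sqrt.tendsto 0).comp hsq
    have h2 : (fun t => Real.sqrt (‖e t‖ ^ 2)) = fun t => ‖e t‖ :=
      funext fun t => Real.sqrt_sq (norm_nonneg _)
    rw [Real.sqrt_zero] at h1
    rwa [h2] at h1
  refine ⟨hbound, htnorm, fun hc => ?_⟩
  have h2 : Tendsto (fun t => ‖e t‖) (nhdsWithin te (Set.Iio te)) (nhds ‖e te‖) :=
    ((continuous_norm.continuousAt.comp hc).tendsto).mono_left nhdsWithin_le_nhds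
  have h3 := tendsto_nhds_unique h2 htnorm
  simpa [norm_eq_zero] using h3
end

section
/- Consider the planar engagement kinematics with a pursuer under deviated pursuit guidance: constants V_T, γ_T, V_P with V_P ≠ 0 and V_P² ≠ V_T², differentiable functions r, θ, γ_P : ℝ → ℝ and a control a : ℝ → ℝ satisfying, on an interval I, r' = V_T cos(γ_T − θ) − V_P cos δ, r·θ' = V_T sin(γ_T − θ) − V_P sin δ, and γ_P' = a/V_P, where δ = γ_P − θ. Define V_r = V_T cos(γ_T − θ) − V_P cos δ, V_θ = V_T sin(γ_T − θ) − V_P sin δ, and t_go = r·(V_r + 2 V_P cos δ − V_θ tan δ)/(V_P² − V_T²). Then at every t ∈ I with r(t) > 0 and cos δ(t) ≠ 0, t_go is differentiable with t_go'(t) = −1 + V_θ(t)²·sec² δ(t)/(V_P² − V_T²) − (r(t)·V_θ(t)·sec² δ(t)/(V_P·(V_P² − V_T²)))·a(t). -/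
/-- Deviation (lead) angle `δ = γ_P − θ`. -/
noncomputable def devAngle (θ γP : ℝ → ℝ) (t : ℝ) : ℝ := γP t - θ t

/-- Relative velocity component along the line of sight (constant pursuer speed). -/
noncomputable def Vrad (VT γT VP : ℝ) (θ γP : ℝ → ℝ) (t : ℝ) : ℝ :=
  VT * Real.cos (γT - θ t) - VP * Real.cos (devAngle θ γP t)

/-- Relative velocity component across the line of sight (constant pursuer speed). -/
noncomputable def Vlos (VT γT VP : ℝ) (θ γP : ℝ → ℝ) (t : ℝ) : ℝ :=
  VT * Real.sin (γT - θ t) - VP * Real.sin (devAngle θ γP t)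

/-- Deviated-pursuit time-to-go
`t_go = r (V_r + 2 V_P cos δ − V_θ tan δ)/(V_P² − V_T²)`. -/
noncomputable def tgoDP (VT γT VP : ℝ) (r θ γP : ℝ → ℝ) (t : ℝ) : ℝ :=
  r t * (Vrad VT γT VP θ γP t + 2 * VP * Real.cos (devAngle θ γP t)
      - Vlos VT γT VP θ γP t * Real.tan (devAngle θ γP t)) / (VP ^ 2 - VT ^ 2)

/-- equation (17) of the paper: the derivative of the
deviated-pursuit time-to-go along the engagement kinematics. -/
theorem tgoDP_deriv
    (VT γT VP : ℝ) (hVP : VP ≠ 0) (hV2 : VP ^ 2 ≠ VT ^ 2)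
    (I : Set ℝ) (r θ γP a θd : ℝ → ℝ)
    (hr : ∀ t ∈ I, HasDerivAt r (Vrad VT γT VP θ γP t) t)
    (hθ : ∀ t ∈ I, HasDerivAt θ (θd t) t)
    (hθd : ∀ t ∈ I, r t * θd t = Vlos VT γT VP θ γP t)
    (hγ : ∀ t ∈ I, HasDerivAt γP (a t / VP) t) :
    ∀ t ∈ I, 0 < r t → Real.cos (devAngle θ γP t) ≠ 0 →
      HasDerivAt (tgoDP VT γT VP r θ γP)
        (-1 + Vlos VT γT VP θ γP t ^ 2 * (1 / Real.cos (devAngle θ γP t) ^ 2)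
              / (VP ^ 2 - VT ^ 2)
          - (r t * Vlos VT γT VP θ γP t * (1 / Real.cos (devAngle θ γP t) ^ 2)
              / (VP * (VP ^ 2 - VT ^ 2))) * a t) t := by
  intro t ht hrpos hcos
  have hc : VP ^ 2 - VT ^ 2 ≠ 0 := sub_ne_zero.mpr hV2
  have hδ : HasDerivAt (fun u => devAngle θ γP u) (a t / VP - θd t) t :=
    (hγ t ht).sub (hθ t ht)
  have hθγ : HasDerivAt (fun u => γT - θ u) (-(θd t)) t := by
    simpa using (hθ t ht).const_sub γT
  have hcosδ : HasDerivAt (fun u => Real.cos (devAngle θ γP u))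
      (-Real.sin (devAngle θ γP t) * (a t / VP - θd t)) t :=
    (Real.hasDerivAt_cos _).comp t hδ
  have hsinδ : HasDerivAt (fun u => Real.sin (devAngle θ γP u))
      (Real.cos (devAngle θ γP t) * (a t / VP - θd t)) t :=
    (Real.hasDerivAt_sin _).comp t hδ
  have hcosθ : HasDerivAt (fun u => Real.cos (γT - θ u))
      (-Real.sin (γT - θ t) * -(θd t)) t :=
    (Real.hasDerivAt_cos _).comp t hθγ
  have hsinθ : HasDerivAt (fun u => Real.sin (γT - θ u))
      (Real.cos (γT - θ t) * -(θd t)) t :=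
    (Real.hasDerivAt_sin _).comp t hθγ
  have hVrad : HasDerivAt (fun u => Vrad VT γT VP θ γP u)
      (VT * (-Real.sin (γT - θ t) * -(θd t))
        - VP * (-Real.sin (devAngle θ γP t) * (a t / VP - θd t))) t :=
    (hcosθ.const_mul VT).sub (hcosδ.const_mul VP)
  have hVlos : HasDerivAt (fun u => Vlos VT γT VP θ γP u)
      (VT * (Real.cos (γT - θ t) * -(θd t))
        - VP * (Real.cos (devAngle θ γP t) * (a t / VP - θd t))) t :=
    (hsinθ.const_mul VT).sub (hsinδ.const_mul VP)
  have htan : HasDerivAt (fun u => Real.tan (devAngle θ γP u))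
      (1 / Real.cos (devAngle θ γP t) ^ 2 * (a t / VP - θd t)) t :=
    (Real.hasDerivAt_tan hcos).comp t hδ
  have hE : HasDerivAt (fun u => Vrad VT γT VP θ γP u
        + 2 * VP * Real.cos (devAngle θ γP u)
        - Vlos VT γT VP θ γP u * Real.tan (devAngle θ γP u))
      ((VT * (-Real.sin (γT - θ t) * -(θd t))
          - VP * (-Real.sin (devAngle θ γP t) * (a t / VP - θd t)))
        + 2 * VP * (-Real.sin (devAngle θ γP t) * (a t / VP - θd t))
        - ((VT * (Real.cos (γT - θ t) * -(θd t))
            - VP * (Real.cos (devAngle θ γP t) * (a t / VP - θd t)))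
              * Real.tan (devAngle θ γP t)
          + Vlos VT γT VP θ γP t
              * (1 / Real.cos (devAngle θ γP t) ^ 2 * (a t / VP - θd t)))) t :=
    (hVrad.add (hcosδ.const_mul (2 * VP))).sub (hVlos.mul htan)
  have htotal := ((hr t ht).mul hE).div_const (VP ^ 2 - VT ^ 2)
  refine htotal.congr_deriv ?_
  have hθdv : θd t = Vlos VT γT VP θ γP t / r t := by
    field_simp
    linarith [hθd t ht]
  have hpyth := Real.sin_sq_add_cos_sq (devAngle θ γP t)
  have hpyth2 := Real.sin_sq_add_cos_sq (γT - θ t)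
  rw [hθdv, Real.tan_eq_sin_div_cos]
  simp only [Vlos, Vrad]
  set c1 := Real.cos (devAngle θ γP t) with hc1
  set s1 := Real.sin (devAngle θ γP t) with hs1
  set c2 := Real.cos (γT - θ t) with hc2
  set s2 := Real.sin (γT - θ t) with hs2
  set R := r t with hR
  set A := a t with hA
  have hR0 : R ≠ 0 := ne_of_gt hrpos
  field_simp
  linear_combination (-(VP^3 * c1^2)) * hpyth + (VP * c1^2 * VT^2) * hpyth2
end

section
/- Under the deviated-pursuit engagement kinematics (r' = V_T cos(γ_T − θ) − V_P cos δ, r·θ' = V_T sin(γ_T − θ) − V_P sin δ, γ_P' = a/V_P, δ = γ_P − θ, constants V_T, γ_T, V_P ≠ 0, V_P² ≠ V_T²), let s : ℝ → ℝ be any function, let α, β ∈ ℝ, let t_e > 0 and let h be the scaling function associated with t_e. If on an interval I ⊆ (0, t_e) one has r > 0, cos δ ≠ 0, V_θ ≠ 0, and the command a(t) = V_P·θ'(t) + [V_P·(V_P² − V_T²)·cos² δ(t)/(r(t)·V_θ(t))]·(α − β·h'(t)/h(t))·s(t) is applied, then the deviated-pursuit time-to-go t_go = r·(V_r + 2 V_P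 cos δ − V_θ tan δ)/(V_P² − V_T²) satisfies t_go'(t) = −1 + (−α + β·h'(t)/h(t))·s(t) for all t ∈ I. -/
set_option maxHeartbeats 2000000 in
/-- Corollary 1 of the paper: under the proposed
deviated-pursuit cooperative command, the time-to-go error dynamics reduce to
`t_go' = −1 + (−α + β h'/h) s`. -/
theorem tgoDP_closed_loop
    (VT γT VP : ℝ) (hVP : VP ≠ 0) (hV2 : VP ^ 2 ≠ VT ^ 2)
    (α β te : ℝ) (hte : 0 < te)
    (s : ℝ → ℝ) (I : Set ℝ) (hI : I ⊆ Set.Ioo 0 te)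
    (r θ γP a θd : ℝ → ℝ)
    (hr : ∀ t ∈ I, HasDerivAt r (Vrad VT γT VP θ γP t) t)
    (hθ : ∀ t ∈ I, HasDerivAt θ (θd t) t)
    (hθd : ∀ t ∈ I, r t * θd t = Vlos VT γT VP θ γP t)
    (hγ : ∀ t ∈ I, HasDerivAt γP (a t / VP) t)
    (hrpos : ∀ t ∈ I, 0 < r t)
    (hcos : ∀ t ∈ I, Real.cos (devAngle θ γP t) ≠ 0)
    (hVθ : ∀ t ∈ I, Vlos VT γT VP θ γP t ≠ 0)
    (hcmd : ∀ t ∈ I,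
      a t = VP * θd t
        + (VP * (VP ^ 2 - VT ^ 2) * Real.cos (devAngle θ γP t) ^ 2
            / (r t * Vlos VT γT VP θ γP t))
          * (α - β * ((Real.cos (Real.pi * t / te) + 1) / scalingFn te t)) * s t) :
    ∀ t ∈ I, HasDerivAt (tgoDP VT γT VP r θ γP)
      (-1 + (-α + β * ((Real.cos (Real.pi * t / te) + 1) / scalingFn te t)) * s t) t := by

  intro t ht
  have hδ' : HasDerivAt (fun u => devAngle θ γP u) (a t / VP - θd t) t := by
    unfold devAngle
    exact (hγ t ht).sub (hθ t ht)
  have hA : HasDerivAt (fun u => γT - θ u) (-(θd t)) t := (hθ t ht).const_sub γT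
  have hVr : HasDerivAt (fun u => Vrad VT γT VP θ γP u)
      (VT * (-Real.sin (γT - θ t) * (-(θd t)))
        - VP * (-Real.sin (devAngle θ γP t) * (a t / VP - θd t))) t := by
    unfold Vrad
    exact (hA.cos.const_mul VT).sub (hδ'.cos.const_mul VP)
  have hVl : HasDerivAt (fun u => Vlos VT γT VP θ γP u)
      (VT * (Real.cos (γT - θ t) * (-(θd t)))
        - VP * (Real.cos (devAngle θ γP t) * (a t / VP - θd t))) t := by
    unfold Vlos
    exact (hA.sin.const_mul VT).sub (hδ'.sin.const_mul VP)
  have htan : HasDerivAt (fun u => Real.tan (devAngle θ γP u))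
      ((1 / Real.cos (devAngle θ γP t) ^ 2) * (a t / VP - θd t)) t := by
    have := (Real.hasDerivAt_tan (hcos t ht)).comp t hδ'
    exact this.congr_deriv (by ring)
  have hP : HasDerivAt (fun u => Vrad VT γT VP θ γP u + 2 * VP * Real.cos (devAngle θ γP u)
      - Vlos VT γT VP θ γP u * Real.tan (devAngle θ γP u))
      ((VT * (-Real.sin (γT - θ t) * (-(θd t)))
        - VP * (-Real.sin (devAngle θ γP t) * (a t / VP - θd t)))
       + 2 * VP * (-Real.sin (devAngle θ γP t) * (a t / VP - θd t))
       - ((VT * (Real.cos (γT - θ t) * (-(θd t)))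
        - VP * (Real.cos (devAngle θ γP t) * (a t / VP - θd t))) * Real.tan (devAngle θ γP t)
        + Vlos VT γT VP θ γP t * ((1 / Real.cos (devAngle θ γP t) ^ 2) * (a t / VP - θd t)))) t := by
    exact (hVr.add (hδ'.cos.const_mul (2 * VP))).sub (hVl.mul htan)
  have hF := ((hr t ht).mul hP).div_const (VP ^ 2 - VT ^ 2)
  have hfun : (tgoDP VT γT VP r θ γP) = fun u => r u * (Vrad VT γT VP θ γP u
      + 2 * VP * Real.cos (devAngle θ γP u)
      - Vlos VT γT VP θ γP u * Real.tan (devAngle θ γP u)) / (VP ^ 2 - VT ^ 2) := rfl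
  rw [hfun]
  refine hF.congr_deriv ?_
  symm
  -- now the algebraic identity
  have hc : VP ^ 2 - VT ^ 2 ≠ 0 := sub_ne_zero.mpr hV2
  have hrt : r t ≠ 0 := ne_of_gt (hrpos t ht)
  have hVlt := hVθ t ht
  have hθdt := hθd t ht
  have hcd := hcos t ht
  rw [hcmd t ht]
  rw [Real.tan_eq_sin_div_cos]
  set w : ℝ := (Real.cos (Real.pi * t / te) + 1) / scalingFn te t with hw
  have h1 : Real.sin (γT - θ t) ^ 2 + Real.cos (γT - θ t) ^ 2 = 1 := Real.sin_sq_add_cos_sq _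
  have h2 : Real.sin (devAngle θ γP t) ^ 2 + Real.cos (devAngle θ γP t) ^ 2 = 1 :=
    Real.sin_sq_add_cos_sq _
  unfold Vrad Vlos at *
  set cA := Real.cos (γT - θ t)
  set sA := Real.sin (γT - θ t)
  set cd := Real.cos (devAngle θ γP t)
  set sd := Real.sin (devAngle θ γP t)
  set R := r t
  set td := θd t
  set S := s t
  have hVl2 : VT * sA - VP * sd ≠ 0 := hVlt
  have htd : td = (VT * sA - VP * sd) / R := by
    rw [eq_div_iff hrt, mul_comm]; exact hθdt
  rw [htd]
  field_simp
  linear_combination (cd ^ 2 * VT ^ 2 * VP * sd - cd ^ 2 * VT ^ 3 * sA) * h1 + (cd ^ 2 * VT * sA * VP ^ 2 - cd ^ 2 * VP ^ 3 * sd) * h2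
end

section
/- Let t0 < t1 be real numbers, let V : ℝ → ℝ be differentiable and nonnegative on [t0, t1], let μ : ℝ → ℝ be differentiable with μ(t) ≠ 0 on [t0, t1], and let b > 0. If V'(t) ≤ −b·V(t) − 2·(μ'(t)/μ(t))·V(t) for all t ∈ [t0, t1], then μ(t)²·V(t) ≤ exp(−b·(t − t0))·μ(t0)²·V(t0) for all t ∈ [t0, t1]. -/
/-- Lemma 1 of the paper: a Grönwall-type prescribed-time
Lyapunov comparison estimate: if `V' ≤ −bV − 2(μ'/μ)V` on `[t0, t1]`, then
`μ(t)² V(t) ≤ exp(−b(t − t0)) μ(t0)² V(t0)` on `[t0, t1]`. -/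
theorem lyapunov_comparison
    (t0 t1 : ℝ) (h01 : t0 < t1) (b : ℝ) (hb : 0 < b)
    (V μ V' μ' : ℝ → ℝ)
    (hV : ∀ t ∈ Set.Icc t0 t1, HasDerivWithinAt V (V' t) (Set.Icc t0 t1) t)
    (hVnn : ∀ t ∈ Set.Icc t0 t1, 0 ≤ V t)
    (hμ : ∀ t ∈ Set.Icc t0 t1, HasDerivWithinAt μ (μ' t) (Set.Icc t0 t1) t)
    (hμne : ∀ t ∈ Set.Icc t0 t1, μ t ≠ 0)
    (hineq : ∀ t ∈ Set.Icc t0 t1, V' t ≤ -b * V t - 2 * (μ' t / μ t) * V t) :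
    ∀ t ∈ Set.Icc t0 t1,
      μ t ^ 2 * V t ≤ Real.exp (-b * (t - t0)) * μ t0 ^ 2 * V t0 := by
  set s := Set.Icc t0 t1 with hs
  set W : ℝ → ℝ := fun t => μ t ^ 2 * (Real.exp (b * (t - t0)) * V t) with hW
  set W' : ℝ → ℝ := fun t =>
    2 * μ t * μ' t * (Real.exp (b * (t - t0)) * V t)
      + μ t ^ 2 * (b * Real.exp (b * (t - t0)) * V t
          + Real.exp (b * (t - t0)) * V' t) with hW'
  have hWderiv : ∀ t ∈ s, HasDerivWithinAt W (W' t) s t := by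
    intro t ht
    have hexp : HasDerivWithinAt (fun u => Real.exp (b * (u - t0)))
        (b * Real.exp (b * (t - t0))) s t := by
      have h1 : HasDerivWithinAt (fun u : ℝ => b * (u - t0)) b s t := by
        simpa using ((hasDerivWithinAt_id t s).sub_const t0).const_mul b
      simpa [mul_comm, Function.comp_def] using (Real.hasDerivAt_exp (b * (t - t0))).comp_hasDerivWithinAt t h1
    have hsq : HasDerivWithinAt (fun u => μ u ^ 2) (2 * μ t * μ' t) s t := by
      have := (hμ t ht).pow 2
      exact this.congr_deriv (by push_cast; ring)
    have hprod := hexp.mul (hV t ht)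
    have := hsq.mul hprod
    exact this.congr_deriv (by simp only [W', Pi.mul_apply])
  have hW'nonpos : ∀ t ∈ s, W' t ≤ 0 := by
    intro t ht
    have hVle := hineq t ht
    have hμt := hμne t ht
    have hkey : μ t ^ 2 * V' t ≤ -b * (μ t ^ 2 * V t) - 2 * (μ t * μ' t) * V t := by
      have := mul_le_mul_of_nonneg_left hVle (sq_nonneg (μ t))
      calc μ t ^ 2 * V' t ≤ μ t ^ 2 * (-b * V t - 2 * (μ' t / μ t) * V t) := this
        _ = -b * (μ t ^ 2 * V t) - 2 * (μ t ^ 2 * (μ' t / μ t)) * V t := by ring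
        _ = -b * (μ t ^ 2 * V t) - 2 * (μ t * μ' t) * V t := by
            rw [show μ t ^ 2 * (μ' t / μ t) = μ t * μ' t by
              field_simp]
    have hexppos : 0 < Real.exp (b * (t - t0)) := Real.exp_pos _
    have : W' t = Real.exp (b * (t - t0)) *
        (2 * μ t * μ' t * V t + b * (μ t ^ 2 * V t) + μ t ^ 2 * V' t) := by
      simp only [W']; ring
    rw [this]
    apply mul_nonpos_of_nonneg_of_nonpos hexppos.le
    linarith
  have hWcont : ContinuousOn W s := fun t ht => (hWderiv t ht).continuousWithinAt
  have hanti : AntitoneOn W s := by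
    apply antitoneOn_of_deriv_nonpos (convex_Icc t0 t1) hWcont
    · intro t ht
      rw [interior_Icc] at ht
      have hmem : t ∈ s := Set.mem_Icc_of_Ioo ht
      exact ((hWderiv t hmem).hasDerivAt (Icc_mem_nhds ht.1 ht.2)).differentiableAt.differentiableWithinAt
    · intro t ht
      rw [interior_Icc] at ht
      have hmem : t ∈ s := Set.mem_Icc_of_Ioo ht
      rw [((hWderiv t hmem).hasDerivAt (Icc_mem_nhds ht.1 ht.2)).deriv]
      exact hW'nonpos t hmem
  intro t ht
  have ht0 : t0 ∈ s := Set.left_mem_Icc.2 h01.le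
  have hWle : W t ≤ W t0 := hanti ht0 ht ht.1
  have hW0 : W t0 = μ t0 ^ 2 * V t0 := by simp [W]
  have hexppos : 0 < Real.exp (b * (t - t0)) := Real.exp_pos _
  have : μ t ^ 2 * V t = Real.exp (-b * (t - t0)) * W t := by
    have hinv : Real.exp (-b * (t - t0)) = (Real.exp (b * (t - t0)))⁻¹ := by
      rw [← Real.exp_neg]; ring_nf
    simp only [W, hinv]
    field_simp
  rw [this, mul_assoc]
  rw [hW0] at hWle
  exact mul_le_mul_of_nonneg_left hWle (Real.exp_pos _).le
end

section
/- Let t_e > 0, let h be the scaling function associated with t_e, let b > 0, and let V : ℝ → ℝ be nonnegative, continuous on [0, t_e) and differentiable on (0, t_e) with V'(t) ≤ −b·V(t) + 2·(h'(t)/h(t))·V(t) for all t ∈ (0, t_e), where h'(t) = cos(πt/t_e) + 1. Then V(t) ≤ (h(t)²/t_e²)·exp(−b·t)·V(0) for all t ∈ [0, t_e), and consequently V(t) → 0 as t → t_e⁻. -/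
open Filter Topology

lemma scalingFn_eq_of_lt {te t : ℝ} (h : t < te) :
    scalingFn te t = (te / Real.pi) * Real.sin (Real.pi * t / te) + t - te := by
  simp [scalingFn, h]

lemma scalingFn_neg {te : ℝ} (hte : 0 < te) {t : ℝ} (ht : t ∈ Set.Ico (0 : ℝ) te) :
    scalingFn te t < 0 := by
  obtain ⟨ht0, ht1⟩ := ht
  rw [scalingFn_eq_of_lt ht1]
  have hπ : (0 : ℝ) < Real.pi := Real.pi_pos
  set s := Real.pi * t / te with hs
  have hs1 : s < Real.pi := by
    rw [hs, div_lt_iff₀ hte]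
    nlinarith
  have hsin : Real.sin s < Real.pi - s := by
    have h1 : Real.sin (Real.pi - s) < Real.pi - s := Real.sin_lt (by linarith)
    rwa [Real.sin_pi_sub] at h1
  have hkey : te / Real.pi * Real.sin s < te / Real.pi * (Real.pi - s) :=
    mul_lt_mul_of_pos_left hsin (div_pos hte hπ)
  have heq : te / Real.pi * (Real.pi - s) = te - t := by
    rw [hs]; field_simp
  linarith [hkey, heq ▸ hkey]

lemma scalingFn_hasDerivAt {te : ℝ} (hte : 0 < te) {t : ℝ} (ht : t < te) :
    HasDerivAt (scalingFn te) (Real.cos (Real.pi * t / te) + 1) t := by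
  have hπ : (0 : ℝ) < Real.pi := Real.pi_pos
  have hform : HasDerivAt (fun u => (te / Real.pi) * Real.sin (Real.pi * u / te) + u - te)
      (Real.cos (Real.pi * t / te) + 1) t := by
    have hinner : HasDerivAt (fun u : ℝ => Real.pi * u / te) (Real.pi / te) t := by
      have h1 : HasDerivAt (fun u : ℝ => (Real.pi / te) * u) ((Real.pi / te) * 1) t :=
        (hasDerivAt_id t).const_mul _
      rw [mul_one] at h1
      convert h1 using 2 with u
      ring
    have hsin : HasDerivAt (fun u : ℝ => Real.sin (Real.pi * u / te))
        (Real.cos (Real.pi * t / te) * (Real.pi / te)) t :=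
      (Real.hasDerivAt_sin _).comp t hinner
    have := ((hsin.const_mul (te / Real.pi)).add (hasDerivAt_id t)).sub_const te
    have e : te / Real.pi * (Real.cos (Real.pi * t / te) * (Real.pi / te)) + 1 = Real.cos (Real.pi * t / te) + 1 := by
      rw [mul_comm (Real.cos _) _, ← mul_assoc, div_mul_div_comm, mul_comm te Real.pi, div_self (by positivity), one_mul]
    exact e ▸ this
  apply hform.congr_of_eventuallyEq
  filter_upwards [Iio_mem_nhds ht] with u hu
  exact scalingFn_eq_of_lt hu

/-- the Lyapunov comparison lemma specialized to `μ = 1/h`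
(equations (14)–(15) of the paper): if `V' ≤ −bV + 2(h'/h)V` on `(0, te)`, then
`V(t) ≤ (h(t)²/te²) exp(−bt) V(0)` on `[0, te)`, and `V(t) → 0` as `t → te⁻`. -/
theorem prescribed_time_lyapunov_decay
    (te : ℝ) (hte : 0 < te) (b : ℝ) (hb : 0 < b)
    (V Vd : ℝ → ℝ)
    (hVnn : ∀ t ∈ Set.Ico (0 : ℝ) te, 0 ≤ V t)
    (hVcont : ContinuousOn V (Set.Ico 0 te))
    (hVder : ∀ t ∈ Set.Ioo (0 : ℝ) te, HasDerivAt V (Vd t) t)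
    (hineq : ∀ t ∈ Set.Ioo (0 : ℝ) te,
      Vd t ≤ -b * V t + 2 * ((Real.cos (Real.pi * t / te) + 1) / scalingFn te t) * V t) :
    (∀ t ∈ Set.Ico (0 : ℝ) te,
      V t ≤ (scalingFn te t) ^ 2 / te ^ 2 * Real.exp (-b * t) * V 0) ∧
    Tendsto V (nhdsWithin te (Set.Iio te)) (nhds 0) := by
  have hπ : (0 : ℝ) < Real.pi := Real.pi_pos
  set G : ℝ → ℝ := fun t => V t * Real.exp (b * t) / (scalingFn te t) ^ 2 with hG
  -- continuity of scalingFn on Ico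
  have hscont : ContinuousOn (scalingFn te) (Set.Ico 0 te) := by
    apply ContinuousOn.congr (f := fun u => (te / Real.pi) * Real.sin (Real.pi * u / te) + u - te)
    · fun_prop
    · intro u hu; exact scalingFn_eq_of_lt hu.2
  have hGcont : ContinuousOn G (Set.Ico 0 te) := by
    apply ContinuousOn.div
    · exact hVcont.mul (by fun_prop)
    · exact hscont.pow 2
    · intro u hu
      exact pow_ne_zero 2 (ne_of_lt (scalingFn_neg hte hu))
  -- derivative of G
  have hGderiv : ∀ t ∈ Set.Ioo (0 : ℝ) te, HasDerivAt G
      (((Vd t * Real.exp (b * t) + V t * (Real.exp (b * t) * b)) * (scalingFn te t) ^ 2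
        - V t * Real.exp (b * t) *
          (2 * scalingFn te t ^ 1 * (Real.cos (Real.pi * t / te) + 1)))
        / ((scalingFn te t) ^ 2) ^ 2) t := by
    intro t ht
    have hexp : HasDerivAt (fun u : ℝ => Real.exp (b * u)) (Real.exp (b * t) * b) t := by
      have h1 : HasDerivAt (fun u : ℝ => b * u) (b * 1) t := (hasDerivAt_id t).const_mul b
      rw [mul_one] at h1
      exact (Real.hasDerivAt_exp (b * t)).comp t h1
    have hN : HasDerivAt (fun u => V u * Real.exp (b * u))
        (Vd t * Real.exp (b * t) + V t * (Real.exp (b * t) * b)) t :=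
      (hVder t ht).mul hexp
    have hD : HasDerivAt (fun u => (scalingFn te u) ^ 2)
        (2 * scalingFn te t ^ 1 * (Real.cos (Real.pi * t / te) + 1)) t :=
      (scalingFn_hasDerivAt hte ht.2).pow 2
    exact hN.div hD (pow_ne_zero 2 (ne_of_lt (scalingFn_neg hte ⟨ht.1.le, ht.2⟩)))
  -- antitone
  have hanti : AntitoneOn G (Set.Ico 0 te) := by
    apply antitoneOn_of_deriv_nonpos (convex_Ico 0 te) hGcont
    · intro t ht
      rw [interior_Ico] at ht
      exact ((hGderiv t ht).differentiableAt).differentiableWithinAt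
    · intro t ht
      rw [interior_Ico] at ht
      rw [(hGderiv t ht).deriv]
      set h := scalingFn te t with hhdef
      set hp := Real.cos (Real.pi * t / te) + 1 with hpdef
      have hhneg : h < 0 := scalingFn_neg hte ⟨ht.1.le, ht.2⟩
      have hhne : h ≠ 0 := ne_of_lt hhneg
      have he : (0 : ℝ) < Real.exp (b * t) := Real.exp_pos _
      have hi := hineq t ht
      have hkey : (Vd t + b * V t) * h ^ 2 ≤ 2 * hp * V t * h := by
        have h1 : Vd t + b * V t ≤ 2 * (hp / h) * V t := by linarith
        calc (Vd t + b * V t) * h ^ 2 ≤ (2 * (hp / h) * V t) * h ^ 2 :=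
              mul_le_mul_of_nonneg_right h1 (sq_nonneg h)
          _ = 2 * hp * V t * h := by field_simp
      apply div_nonpos_of_nonpos_of_nonneg
      · nlinarith [mul_le_mul_of_nonneg_left hkey he.le]
      · positivity
  have h0mem : (0 : ℝ) ∈ Set.Ico (0 : ℝ) te := ⟨le_refl 0, hte⟩
  have hs0 : scalingFn te 0 = -te := by
    rw [scalingFn_eq_of_lt hte]
    simp [mul_comm]
  have hG0 : G 0 = V 0 / te ^ 2 := by
    simp [hG, hs0]
  have main : ∀ t ∈ Set.Ico (0 : ℝ) te,
      V t ≤ (scalingFn te t) ^ 2 / te ^ 2 * Real.exp (-b * t) * V 0 := by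
    intro t ht
    have hGle : G t ≤ G 0 := hanti h0mem ht ht.1
    rw [hG0] at hGle
    have hh2 : (0 : ℝ) < (scalingFn te t) ^ 2 :=
      pow_two_pos_of_ne_zero (ne_of_lt (scalingFn_neg hte ht))
    have hep : (0 : ℝ) < Real.exp (b * t) := Real.exp_pos _
    have hte2 : (0 : ℝ) < te ^ 2 := by positivity
    rw [hG, div_le_div_iff₀ hh2 hte2] at hGle
    have hform : (scalingFn te t) ^ 2 / te ^ 2 * Real.exp (-b * t) * V 0
        = V 0 * (scalingFn te t) ^ 2 / (te ^ 2 * Real.exp (b * t)) := by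
      rw [neg_mul, Real.exp_neg]
      field_simp
    rw [hform, le_div_iff₀ (by positivity)]
    nlinarith [hGle]
  refine ⟨main, ?_⟩
  -- the limit
  have hs_lim : Tendsto (scalingFn te) (nhdsWithin te (Set.Iio te)) (nhds 0) := by
    have hf : Tendsto (fun u => (te / Real.pi) * Real.sin (Real.pi * u / te) + u - te)
        (nhdsWithin te (Set.Iio te)) (nhds 0) := by
      have hc : ContinuousAt (fun u => (te / Real.pi) * Real.sin (Real.pi * u / te) + u - te)
          te := by fun_prop
      have htend := (hc.tendsto).mono_left (nhdsWithin_le_nhds (s := Set.Iio te))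
      convert htend using 2
      have : Real.pi * te / te = Real.pi := by field_simp
      rw [this, Real.sin_pi]
      ring
    apply hf.congr'
    filter_upwards [self_mem_nhdsWithin] with u hu
    exact (scalingFn_eq_of_lt hu).symm
  have hub : Tendsto (fun t => (scalingFn te t) ^ 2 / te ^ 2 * Real.exp (-b * t) * V 0)
      (nhdsWithin te (Set.Iio te)) (nhds 0) := by
    have h1 : Tendsto (fun t => (scalingFn te t) ^ 2 / te ^ 2 * Real.exp (-b * t) * V 0)
        (nhdsWithin te (Set.Iio te))
        (nhds ((0 : ℝ) ^ 2 / te ^ 2 * Real.exp (-b * te) * V 0)) := by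
      apply Tendsto.mul _ tendsto_const_nhds
      apply Tendsto.mul
      · exact (hs_lim.pow 2).div_const _
      · exact ((Real.continuous_exp.comp (continuous_const.mul continuous_id)).tendsto
          te).mono_left nhdsWithin_le_nhds
    simpa using h1
  have hmem : Set.Ioo (0 : ℝ) te ∈ nhdsWithin te (Set.Iio te) := by
    apply mem_nhdsWithin.2
    exact ⟨Set.Ioi 0, isOpen_Ioi, hte, by
      rintro x ⟨hx1, hx2⟩
      exact ⟨hx1, hx2⟩⟩
  apply squeeze_zero'
  · filter_upwards [hmem] with u hu
    exact hVnn u ⟨hu.1.le, hu.2⟩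
  · filter_upwards [hmem] with u hu
    exact main u ⟨hu.1.le, hu.2⟩
  · exact hub
end

section
/- Consider the planar engagement kinematics with constants V_T, γ_T, differentiable functions r, θ, γ_P, V_P : ℝ → ℝ and control a : ℝ → ℝ satisfying, on an interval I with r > 0 and V_P ≠ 0, r' = V_T cos(γ_T − θ) − V_P cos δ, r·θ' = V_T sin(γ_T − θ) − V_P sin δ, γ_P' = a·cos δ / V_P, and V_P' = a·sin δ, where δ = γ_P − θ. Define V_r = V_T cos(γ_T − θ) − V_P cos δ and V_θ = V_T sin(γ_T − θ) − V_P sin δ. Then for all t ∈ I, V_r'(t) = V_θ(t)²/r(t) and V_θ'(t) = −V_r(t)·V_θ(t)/r(t) − a(t). -/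
/-- Relative velocity component along the line of sight (time-varying pursuer speed). -/
noncomputable def VradT (VT γT : ℝ) (θ γP VP : ℝ → ℝ) (t : ℝ) : ℝ :=
  VT * Real.cos (γT - θ t) - VP t * Real.cos (devAngle θ γP t)

/-- Relative velocity component across the line of sight (time-varying pursuer speed). -/
noncomputable def VlosT (VT γT : ℝ) (θ γP VP : ℝ → ℝ) (t : ℝ) : ℝ :=
  VT * Real.sin (γT - θ t) - VP t * Real.sin (devAngle θ γP t)

/-- kinematic derivative identities for a
true-proportional-navigation pursuer whose acceleration acts perpendicular
to the line of sight: `V_r' = V_θ²/r` and `V_θ' = −V_r V_θ/r − a`. -/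
theorem Vr_Vtheta_deriv_TPN
    (VT γT : ℝ) (I : Set ℝ) (r θ γP VP a θd : ℝ → ℝ)
    (hrpos : ∀ t ∈ I, 0 < r t)
    (hVPne : ∀ t ∈ I, VP t ≠ 0)
    (hr : ∀ t ∈ I, HasDerivAt r (VradT VT γT θ γP VP t) t)
    (hθ : ∀ t ∈ I, HasDerivAt θ (θd t) t)
    (hθd : ∀ t ∈ I, r t * θd t = VlosT VT γT θ γP VP t)
    (hγ : ∀ t ∈ I, HasDerivAt γP (a t * Real.cos (devAngle θ γP t) / VP t) t)
    (hVPd : ∀ t ∈ I, HasDerivAt VP (a t * Real.sin (devAngle θ γP t)) t) :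
    ∀ t ∈ I,
      HasDerivAt (VradT VT γT θ γP VP) (VlosT VT γT θ γP VP t ^ 2 / r t) t ∧
      HasDerivAt (VlosT VT γT θ γP VP)
        (-(VradT VT γT θ γP VP t * VlosT VT γT θ γP VP t) / r t - a t) t := by
  intro t ht
  have hr0 : r t ≠ 0 := (hrpos t ht).ne'
  have hV0 : VP t ≠ 0 := hVPne t ht
  have hθdval : θd t = VlosT VT γT θ γP VP t / r t := by
    field_simp
    linarith [hθd t ht]
  have hδ : HasDerivAt (devAngle θ γP)
      (a t * Real.cos (devAngle θ γP t) / VP t - θd t) t := by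
    exact (hγ t ht).fun_sub (hθ t ht)
  -- derivative of V_r
  have h1 : HasDerivAt (fun s => VT * Real.cos (γT - θ s))
      (VT * (-Real.sin (γT - θ t) * (0 - θd t))) t :=
    (((hasDerivAt_const t γT).sub (hθ t ht)).cos).const_mul VT
  have h2 : HasDerivAt (fun s => VP s * Real.cos (devAngle θ γP s))
      (a t * Real.sin (devAngle θ γP t) * Real.cos (devAngle θ γP t)
        + VP t * (-Real.sin (devAngle θ γP t)
            * (a t * Real.cos (devAngle θ γP t) / VP t - θd t))) t :=
    (hVPd t ht).mul hδ.cos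
  have h3 : HasDerivAt (fun s => VT * Real.sin (γT - θ s))
      (VT * (Real.cos (γT - θ t) * (0 - θd t))) t :=
    (((hasDerivAt_const t γT).sub (hθ t ht)).sin).const_mul VT
  have h4 : HasDerivAt (fun s => VP s * Real.sin (devAngle θ γP s))
      (a t * Real.sin (devAngle θ γP t) * Real.sin (devAngle θ γP t)
        + VP t * (Real.cos (devAngle θ γP t)
            * (a t * Real.cos (devAngle θ γP t) / VP t - θd t))) t :=
    (hVPd t ht).mul hδ.sin
  constructor
  · have h := h1.fun_sub h2
    have heq : VT * (-Real.sin (γT - θ t) * (0 - θd t))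
        - (a t * Real.sin (devAngle θ γP t) * Real.cos (devAngle θ γP t)
          + VP t * (-Real.sin (devAngle θ γP t)
              * (a t * Real.cos (devAngle θ γP t) / VP t - θd t)))
        = VlosT VT γT θ γP VP t ^ 2 / r t := by
      rw [hθdval]
      unfold VlosT
      field_simp
      ring
    rw [heq] at h
    exact h
  · have h := h3.fun_sub h4
    have heq : VT * (Real.cos (γT - θ t) * (0 - θd t))
        - (a t * Real.sin (devAngle θ γP t) * Real.sin (devAngle θ γP t)
          + VP t * (Real.cos (devAngle θ γP t)
              * (a t * Real.cos (devAngle θ γP t) / VP t - θd t)))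
        = -(VradT VT γT θ γP VP t * VlosT VT γT θ γP VP t) / r t - a t := by
      rw [hθdval]
      unfold VradT VlosT
      have hpyth := Real.sin_sq_add_cos_sq (devAngle θ γP t)
      field_simp
      linear_combination (-(r t * a t)) * hpyth
    rw [heq] at h
    exact h
end

section
/- Let N ≥ 1, let L be a real N×N matrix, let λ > 0 satisfy x ⬝ (L x) ≥ λ‖x‖² for all x ∈ ℝᴺ, let α > 0 and β with βλ ≥ 1, and let φ : ℝ → ℝ be a function with φ(t) ≤ 0 on an interval I. Suppose e : ℝ → ℝᴺ is differentiable on I with e'(t) = (−α + β·φ(t))·(L e(t)), and set V(t) = ‖e(t)‖²/2. Then for all t ∈ I, V'(t) ≤ −2αλ·V(t) + 2·φ(t)·V(t). -/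
open Matrix

lemma inner_eq_dot (N : ℕ) (x y : EuclideanSpace ℝ (Fin N)) :
    (inner ℝ x y : ℝ) = (x : Fin N → ℝ) ⬝ᵥ (y : Fin N → ℝ) := by
  simp [PiLp.inner_apply, dotProduct, RCLike.inner_apply, mul_comm]

/-- equations (13)–(14) of the paper: the Lyapunov
differential inequality step. With `V = ‖e‖²/2` along `e' = (−α + βφ) L e`,
where `x ⬝ (L x) ≥ λ‖x‖²`, `α > 0`, `βλ ≥ 1`, and `φ ≤ 0` on `I`, one gets
`V' ≤ −2αλ V + 2φ V` on `I`. -/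
theorem lyapunov_inequality_step
    (N : ℕ) (hN : 1 ≤ N) (L : Matrix (Fin N) (Fin N) ℝ)
    (lam : ℝ) (hlam : 0 < lam)
    (hquad : ∀ x : EuclideanSpace ℝ (Fin N), lam * ‖x‖ ^ 2 ≤ x ⬝ᵥ L.mulVec x)
    (α β : ℝ) (hα : 0 < α) (hβ : 1 ≤ β * lam)
    (φ : ℝ → ℝ) (I : Set ℝ) (hφ : ∀ t ∈ I, φ t ≤ 0)
    (e : ℝ → EuclideanSpace ℝ (Fin N))
    (hode : ∀ t ∈ I,
      HasDerivAt e ((-α + β * φ t) • (WithLp.toLp 2 (L.mulVec (e t)) : EuclideanSpace ℝ (Fin N))) t) :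
    ∀ t ∈ I, ∃ Vd : ℝ,
      HasDerivAt (fun τ => ‖e τ‖ ^ 2 / 2) Vd t ∧
      Vd ≤ -(2 * α * lam) * (‖e t‖ ^ 2 / 2) + 2 * φ t * (‖e t‖ ^ 2 / 2) := by
  intro t ht
  have hd := hode t ht
  set c : ℝ := -α + β * φ t with hc
  set w : EuclideanSpace ℝ (Fin N) := (WithLp.toLp 2 (L.mulVec (e t)) : EuclideanSpace ℝ (Fin N)) with hw
  have hQ : lam * ‖e t‖ ^ 2 ≤ (e t : Fin N → ℝ) ⬝ᵥ L.mulVec (e t) := hquad (e t)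
  have hinner : HasDerivAt (fun τ => (inner ℝ (e τ) (e τ) : ℝ))
      (inner ℝ (e t) (c • w) + inner ℝ (c • w) (e t)) t := hd.inner ℝ hd
  have hV : HasDerivAt (fun τ => ‖e τ‖ ^ 2 / 2)
      ((inner ℝ (e t) (c • w) + (inner ℝ (c • w) (e t) : ℝ)) / 2) t := by
    have := hinner.div_const 2
    simpa only [real_inner_self_eq_norm_sq] using this
  refine ⟨_, hV, ?_⟩
  have hval : (inner ℝ (e t) (c • w) + (inner ℝ (c • w) (e t) : ℝ)) / 2
      = c * ((e t : Fin N → ℝ) ⬝ᵥ L.mulVec (e t)) := by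
    rw [real_inner_smul_right, real_inner_smul_left, real_inner_comm w (e t), inner_eq_dot, hw, WithLp.ofLp_toLp, dotProduct_comm]
    ring
  rw [hval]
  have hφt := hφ t ht
  have hnn : (0:ℝ) ≤ ‖e t‖ ^ 2 := by positivity
  nlinarith [mul_nonneg hnn (neg_nonneg.mpr hφt), hlam.le,
    mul_le_mul_of_nonpos_left hQ (show c ≤ 0 by nlinarith)]
end
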